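/- Let h: ℝ^d → (-∞,+∞] be a closed function of Legendre type and let g: ℝ^d → (-∞,+∞] be proper, closed, and convex. Let x̄ ∈ int(dom h) and suppose there is a unique point x⁺ = argmin_x { g(x) + D_h(x, x̄) } with x⁺ ∈ int(dom h) ∩ dom g. Then the infimal-convolution problem min_y { g*(y) + h*(∇h(x̄) − y) } has a solution y⁺, and ∇h(x⁺) + y⁺ = ∇h(x̄). -/

import Mathlib

open scoped RealInnerProductSpace
open Filter Topology

variable {d : ℕ}

/-- Effective domain. -/
def edom (φ : EuclideanSpace ℝ (Fin d) → EReal) : Set (EuclideanSpace ℝ (Fin d)) :=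
  {x | φ x ≠ ⊤}

/-- Finite real-valued representative. -/
noncomputable def fin (φ : EuclideanSpace ℝ (Fin d) → EReal) :
    EuclideanSpace ℝ (Fin d) → ℝ := fun x => (φ x).toReal

/-- Convex conjugate (extended-real-valued). -/
noncomputable def econj (ψ : EuclideanSpace ℝ (Fin d) → EReal) :
    EuclideanSpace ℝ (Fin d) → EReal := fun y =>
  ⨆ θ : EuclideanSpace ℝ (Fin d), (((⟪y, θ⟫ : ℝ) : EReal) - ψ θ)

/-- Essential smoothness. -/
def EssentiallySmooth (φ : EuclideanSpace ℝ (Fin d) → EReal) : Prop :=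
  (interior (edom φ)).Nonempty ∧
  (∀ x ∈ interior (edom φ), DifferentiableAt ℝ (fin φ) x) ∧
  (∀ (x : ℕ → EuclideanSpace ℝ (Fin d)) (x' : EuclideanSpace ℝ (Fin d)),
    (∀ k, x k ∈ interior (edom φ)) → Tendsto x atTop (𝓝 x') →
      x' ∈ frontier (edom φ) →
        Tendsto (fun k => ‖gradient (fin φ) (x k)‖) atTop atTop)

/-- Legendre type. -/
def LegendreType (φ : EuclideanSpace ℝ (Fin d) → EReal) : Prop :=
  EssentiallySmooth φ ∧ StrictConvexOn ℝ (interior (edom φ)) (fin φ)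

/-- The (extended-real-valued) Bregman distance `D_h(x, x̄)`. -/
noncomputable def bregmanD (h : EuclideanSpace ℝ (Fin d) → EReal)
    (x xbar : EuclideanSpace ℝ (Fin d)) : EReal :=
  h x - (((h xbar).toReal : ℝ) : EReal) -
    ((⟪gradient (fin h) xbar, x - xbar⟫ : ℝ) : EReal)

lemma aux_tendsto_quot (f : EuclideanSpace ℝ (Fin d) → ℝ) (x v : EuclideanSpace ℝ (Fin d))
    (hf : DifferentiableAt ℝ f x) :
    Tendsto (fun t : ℝ => (f (x + t • v) - f x) / t) (𝓝[>] (0:ℝ))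
      (𝓝 (⟪gradient f x, v⟫)) := by
  have hF : HasFDerivAt f (InnerProductSpace.toDual ℝ _ (gradient f x)) x :=
    hasGradientAt_iff_hasFDerivAt.mp hf.hasGradientAt
  have hline : HasDerivAt (fun t : ℝ => x + t • v) v 0 := by
    simpa using ((hasDerivAt_id (0:ℝ)).smul_const v).const_add x
  have hcomp : HasDerivAt (fun t : ℝ => f (x + t • v)) (⟪gradient f x, v⟫) 0 := by
    have hF' : HasFDerivAt f (InnerProductSpace.toDual ℝ _ (gradient f x))
        ((fun t : ℝ => x + t • v) 0) := by simpa using hF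
    have := hF'.comp_hasDerivAt 0 hline
    rw [InnerProductSpace.toDual_apply_apply] at this
    exact this
  have := hcomp.tendsto_slope_zero_right
  refine this.congr (fun t => ?_)
  simp [smul_eq_mul, div_eq_inv_mul]

lemma aux_liminf (f : EuclideanSpace ℝ (Fin d) → ℝ) (x v : EuclideanSpace ℝ (Fin d))
    (hf : DifferentiableAt ℝ f x) (c : ℝ)
    (hc : ∀ t : ℝ, t ∈ Set.Ioo (0:ℝ) 1 → c * t ≤ f (x + t • v) - f x) :
    c ≤ ⟪gradient f x, v⟫ := by
  refine ge_of_tendsto (aux_tendsto_quot f x v hf) ?_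
  filter_upwards [Ioo_mem_nhdsGT_of_mem (Set.mem_Ico.mpr ⟨le_refl (0:ℝ), one_pos⟩)] with t ht
  rw [le_div_iff₀ ht.1]
  exact hc t ht

lemma aux_limsup (f : EuclideanSpace ℝ (Fin d) → ℝ) (x v : EuclideanSpace ℝ (Fin d))
    (hf : DifferentiableAt ℝ f x) (c : ℝ)
    (hc : ∀ t : ℝ, t ∈ Set.Ioo (0:ℝ) 1 → f (x + t • v) - f x ≤ c * t) :
    ⟪gradient f x, v⟫ ≤ c := by
  refine le_of_tendsto (aux_tendsto_quot f x v hf) ?_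
  filter_upwards [Ioo_mem_nhdsGT_of_mem (Set.mem_Ico.mpr ⟨le_refl (0:ℝ), one_pos⟩)] with t ht
  rw [div_le_iff₀ ht.1]
  exact hc t ht

/-- (Generalized Moreau decomposition.) If `x⁺` is the unique Bregman proximal
point of `g` at `x̄` and lies in `int dom h ∩ dom g`, then the dual
infimal-convolution problem `min_y g*(y) + h*(∇h(x̄) − y)` has a solution `y⁺`,
and `∇h(x⁺) + y⁺ = ∇h(x̄)`. -/
theorem bregman_moreau_decomposition
    (h g : EuclideanSpace ℝ (Fin d) → EReal)
    (hh_prop : ∀ x, h x ≠ ⊥) (hh_closed : LowerSemicontinuous h)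
    (hh_conv : ∀ x y : EuclideanSpace ℝ (Fin d), ∀ a b : ℝ,
      0 ≤ a → 0 ≤ b → a + b = 1 →
        h (a • x + b • y) ≤ (a : EReal) * h x + (b : EReal) * h y)
    (hh_leg : LegendreType h)
    (hg_prop : (∀ x, g x ≠ ⊥) ∧ (edom g).Nonempty)
    (hg_closed : LowerSemicontinuous g)
    (hg_conv : ∀ x y : EuclideanSpace ℝ (Fin d), ∀ a b : ℝ,
      0 ≤ a → 0 ≤ b → a + b = 1 →
        g (a • x + b • y) ≤ (a : EReal) * g x + (b : EReal) * g y)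
    (xbar : EuclideanSpace ℝ (Fin d)) (hxbar : xbar ∈ interior (edom h))
    (xplus : EuclideanSpace ℝ (Fin d))
    (hmin : ∀ x, g xplus + bregmanD h xplus xbar ≤ g x + bregmanD h x xbar)
    (huniq : ∀ x, (∀ z, g x + bregmanD h x xbar ≤ g z + bregmanD h z xbar) → x = xplus)
    (hmem : xplus ∈ interior (edom h) ∩ edom g) :
    ∃ yplus : EuclideanSpace ℝ (Fin d),
      (∀ y, econj g yplus + econj h (gradient (fin h) xbar - yplus) ≤
        econj g y + econj h (gradient (fin h) xbar - y)) ∧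
      gradient (fin h) xplus + yplus = gradient (fin h) xbar := by
  classical
  obtain ⟨hxpI, hxpg⟩ := hmem
  have hdiff := hh_leg.1.2.1
  have hIsub : interior (edom h) ⊆ edom h := interior_subset
  have hreal : ∀ x, x ∈ edom h → h x = ((fin h x : ℝ) : EReal) := fun x hx =>
    (EReal.coe_toReal hx (hh_prop x)).symm
  have hconvh : Convex ℝ (edom h) := by
    intro x hx y hy a b ha hb hab
    have hle := hh_conv x y a b ha hb hab
    rw [hreal x hx, hreal y hy, ← EReal.coe_mul, ← EReal.coe_mul, ← EReal.coe_add] at hle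
    exact ne_top_of_le_ne_top (EReal.coe_ne_top _) hle
  have hgp : g xplus = ((fin g xplus : ℝ) : EReal) :=
    (EReal.coe_toReal hxpg (hg_prop.1 xplus)).symm
  have hhp : h xplus = ((fin h xplus : ℝ) : EReal) := hreal xplus (hIsub hxpI)
  -- Claim A : real form of the minimality
  have claimA : ∀ x, x ∈ edom h → g x ≠ ⊤ →
      fin g xplus + fin h xplus - ⟪gradient (fin h) xbar, xplus - xbar⟫ ≤
        fin g x + fin h x - ⟪gradient (fin h) xbar, x - xbar⟫ := by
    intro x hxE hgx
    have hmx := hmin x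
    simp only [bregmanD] at hmx
    rw [hgp, hhp, hreal x hxE,
      (EReal.coe_toReal hgx (hg_prop.1 x)).symm] at hmx
    norm_cast at hmx
    simp only [fin] at hmx ⊢
    linarith
  -- Claim C : gradient inequality for h
  have claimC : ∀ z, ((fin h xplus + ⟪gradient (fin h) xplus, z - xplus⟫ : ℝ) : EReal) ≤ h z := by
    intro z
    by_cases hz : h z = ⊤
    · rw [hz]; exact le_top
    · have hzE : z ∈ edom h := hz
      rw [hreal z hzE, EReal.coe_le_coe_iff]
      have key : ⟪gradient (fin h) xplus, z - xplus⟫ ≤ fin h z - fin h xplus := by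
        apply aux_limsup (fin h) xplus (z - xplus) (hdiff xplus hxpI)
        intro t ht
        have h1t : (0:ℝ) < 1 - t := by linarith [ht.2]
        have hxt : (1-t) • xplus + t • z ∈ interior (edom h) :=
          hconvh.combo_interior_self_mem_interior hxpI hzE h1t (le_of_lt ht.1) (by ring)
        have hcv := hh_conv xplus z (1-t) t (le_of_lt h1t) (le_of_lt ht.1) (by ring)
        rw [hhp, hreal z hzE, hreal _ (hIsub hxt), ← EReal.coe_mul, ← EReal.coe_mul,
          ← EReal.coe_add, EReal.coe_le_coe_iff] at hcv
        have heq : xplus + t • (z - xplus) = (1-t) • xplus + t • z := by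
          rw [smul_sub, sub_smul, one_smul]; abel
        rw [heq]
        nlinarith [hcv]
      linarith
  -- Claim B1 : subgradient inequality for g on the interior of edom h
  have claimB1 : ∀ w, w ∈ interior (edom h) →
      ((fin g xplus + ⟪gradient (fin h) xbar - gradient (fin h) xplus, w - xplus⟫ : ℝ) : EReal)
        ≤ g w := by
    intro w hw
    by_cases hgw : g w = ⊤
    · rw [hgw]; exact le_top
    · have e1 : g w = ((fin g w : ℝ) : EReal) := (EReal.coe_toReal hgw (hg_prop.1 w)).symm
      rw [e1, EReal.coe_le_coe_iff]
      have key : fin g xplus - fin g w + ⟪gradient (fin h) xbar, w - xplus⟫ ≤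
          ⟪gradient (fin h) xplus, w - xplus⟫ := by
        apply aux_liminf (fin h) xplus (w - xplus) (hdiff xplus hxpI)
        intro t ht
        have h1t : (0:ℝ) ≤ 1 - t := by linarith [ht.2]
        have hxtI : (1-t) • xplus + t • w ∈ interior (edom h) :=
          hconvh.interior hxpI hw h1t (le_of_lt ht.1) (by ring)
        have hgxt_le : g ((1-t) • xplus + t • w)
            ≤ (((1-t) * fin g xplus + t * fin g w : ℝ) : EReal) := by
          have hcv := hg_conv xplus w (1-t) t h1t (le_of_lt ht.1) (by ring)
          rw [hgp, e1, ← EReal.coe_mul, ← EReal.coe_mul, ← EReal.coe_add] at hcv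
          exact hcv
        have hgxtne : g ((1-t) • xplus + t • w) ≠ ⊤ :=
          ne_top_of_le_ne_top (EReal.coe_ne_top _) hgxt_le
        have e2 : g ((1-t) • xplus + t • w) = ((fin g ((1-t) • xplus + t • w) : ℝ) : EReal) :=
          (EReal.coe_toReal hgxtne (hg_prop.1 _)).symm
        rw [e2, EReal.coe_le_coe_iff] at hgxt_le
        have hA := claimA _ (hIsub hxtI) hgxtne
        have hi : ⟪gradient (fin h) xbar, ((1-t) • xplus + t • w) - xbar⟫ =
            ⟪gradient (fin h) xbar, xplus - xbar⟫ +
              t * ⟪gradient (fin h) xbar, w - xplus⟫ := by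
          have hv : ((1-t) • xplus + t • w) - xbar = (xplus - xbar) + t • (w - xplus) := by
            rw [smul_sub, sub_smul, one_smul]; abel
          rw [hv, inner_add_right, real_inner_smul_right]
        rw [hi] at hA
        have heq : xplus + t • (w - xplus) = (1-t) • xplus + t • w := by
          rw [smul_sub, sub_smul, one_smul]; abel
        rw [heq]
        nlinarith [hA, hgxt_le]
      have hin : ⟪gradient (fin h) xbar - gradient (fin h) xplus, w - xplus⟫ =
          ⟪gradient (fin h) xbar, w - xplus⟫ - ⟪gradient (fin h) xplus, w - xplus⟫ :=
        inner_sub_left _ _ _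
      linarith
  -- Claim B : subgradient inequality for g, everywhere
  have claimB : ∀ z,
      ((fin g xplus + ⟪gradient (fin h) xbar - gradient (fin h) xplus, z - xplus⟫ : ℝ) : EReal)
        ≤ g z := by
    intro z
    by_cases hgz : g z = ⊤
    · rw [hgz]; exact le_top
    · have e1 : g z = ((fin g z : ℝ) : EReal) := (EReal.coe_toReal hgz (hg_prop.1 z)).symm
      have hcont : ContinuousAt (fun t : ℝ => xplus + t • (z - xplus)) 0 := by fun_prop
      have hmem0 : (fun t : ℝ => xplus + t • (z - xplus)) 0 ∈ interior (edom h) := by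
        simpa using hxpI
      have hev := hcont.eventually_mem (isOpen_interior.mem_nhds hmem0)
      obtain ⟨ε, hε, hball⟩ := Metric.eventually_nhds_iff.mp hev
      set s : ℝ := min (ε/2) (1/2) with hsdef
      have hs0 : 0 < s := lt_min (by linarith) (by norm_num)
      have hs1 : s < 1 := lt_of_le_of_lt (min_le_right _ _) (by norm_num)
      have hsd : dist s 0 < ε := by
        rw [Real.dist_eq, sub_zero, abs_of_pos hs0]
        exact lt_of_le_of_lt (min_le_left _ _) (by linarith)
      have hsI : xplus + s • (z - xplus) ∈ interior (edom h) := hball hsd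
      have hB1 := claimB1 _ hsI
      have hgxs_le : g (xplus + s • (z - xplus))
          ≤ (((1-s) * fin g xplus + s * fin g z : ℝ) : EReal) := by
        have hcv := hg_conv xplus z (1-s) s (by linarith) (le_of_lt hs0) (by ring)
        rw [hgp, e1, ← EReal.coe_mul, ← EReal.coe_mul, ← EReal.coe_add] at hcv
        have heq : (1-s) • xplus + s • z = xplus + s • (z - xplus) := by
          rw [smul_sub, sub_smul, one_smul]; abel
        rw [heq] at hcv
        exact hcv
      have hgxsne : g (xplus + s • (z - xplus)) ≠ ⊤ :=
        ne_top_of_le_ne_top (EReal.coe_ne_top _) hgxs_le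
      have e2 : g (xplus + s • (z - xplus)) = ((fin g (xplus + s • (z - xplus)) : ℝ) : EReal) :=
        (EReal.coe_toReal hgxsne (hg_prop.1 _)).symm
      rw [e2, EReal.coe_le_coe_iff] at hgxs_le hB1
      have hi : ⟪gradient (fin h) xbar - gradient (fin h) xplus,
          (xplus + s • (z - xplus)) - xplus⟫ =
          s * ⟪gradient (fin h) xbar - gradient (fin h) xplus, z - xplus⟫ := by
        rw [add_sub_cancel_left, real_inner_smul_right]
      rw [hi] at hB1
      rw [e1, EReal.coe_le_coe_iff]
      have hkey : s * (fin g xplus + ⟪gradient (fin h) xbar - gradient (fin h) xplus,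
          z - xplus⟫) ≤ s * fin g z := by nlinarith [hB1, hgxs_le]
      have := (mul_le_mul_iff_right₀ hs0).mp hkey
      linarith
  -- Claim D1 : Fenchel–Young equality for h
  have claimD1 : econj h (gradient (fin h) xplus)
      = ((⟪gradient (fin h) xplus, xplus⟫ - fin h xplus : ℝ) : EReal) := by
    apply le_antisymm
    · apply iSup_le
      intro θ
      by_cases hθ : h θ = ⊤
      · rw [hθ]
        simp
      · rw [hreal θ hθ, ← EReal.coe_sub, EReal.coe_le_coe_iff]
        have hC := claimC θ
        rw [hreal θ hθ, EReal.coe_le_coe_iff] at hC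
        have hin : ⟪gradient (fin h) xplus, θ - xplus⟫ =
            ⟪gradient (fin h) xplus, θ⟫ - ⟪gradient (fin h) xplus, xplus⟫ :=
          inner_sub_right _ _ _
        linarith
    · have hterm : (((⟪gradient (fin h) xplus, xplus⟫ : ℝ) : EReal) - h xplus)
          = ((⟪gradient (fin h) xplus, xplus⟫ - fin h xplus : ℝ) : EReal) := by
        rw [hhp, ← EReal.coe_sub]
      calc ((⟪gradient (fin h) xplus, xplus⟫ - fin h xplus : ℝ) : EReal)
          = (((⟪gradient (fin h) xplus, xplus⟫ : ℝ) : EReal) - h xplus) := hterm.symm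
        _ ≤ econj h (gradient (fin h) xplus) := by simp only [econj]; exact le_iSup (fun θ => (((⟪gradient (fin h) xplus, θ⟫ : ℝ) : EReal) - h θ)) xplus
  -- Claim D2 : Fenchel–Young equality for g
  have claimD2 : econj g (gradient (fin h) xbar - gradient (fin h) xplus)
      = ((⟪gradient (fin h) xbar - gradient (fin h) xplus, xplus⟫ - fin g xplus : ℝ) : EReal) := by
    apply le_antisymm
    · apply iSup_le
      intro θ
      by_cases hθ : g θ = ⊤
      · rw [hθ]
        simp
      · have e1 : g θ = ((fin g θ : ℝ) : EReal) := (EReal.coe_toReal hθ (hg_prop.1 θ)).symm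
        rw [e1, ← EReal.coe_sub, EReal.coe_le_coe_iff]
        have hB := claimB θ
        rw [e1, EReal.coe_le_coe_iff] at hB
        have hin : ⟪gradient (fin h) xbar - gradient (fin h) xplus, θ - xplus⟫ =
            ⟪gradient (fin h) xbar - gradient (fin h) xplus, θ⟫ -
              ⟪gradient (fin h) xbar - gradient (fin h) xplus, xplus⟫ :=
          inner_sub_right _ _ _
        linarith
    · have hterm : (((⟪gradient (fin h) xbar - gradient (fin h) xplus, xplus⟫ : ℝ) : EReal)
            - g xplus)
          = ((⟪gradient (fin h) xbar - gradient (fin h) xplus, xplus⟫ - fin g xplus : ℝ)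
            : EReal) := by
        rw [hgp, ← EReal.coe_sub]
      calc ((⟪gradient (fin h) xbar - gradient (fin h) xplus, xplus⟫ - fin g xplus : ℝ) : EReal)
          = _ := hterm.symm
        _ ≤ econj g (gradient (fin h) xbar - gradient (fin h) xplus) := by simp only [econj]; exact le_iSup (fun θ => (((⟪gradient (fin h) xbar - gradient (fin h) xplus, θ⟫ : ℝ) : EReal) - g θ)) xplus
  -- Claim E : weak duality lower bound
  have claimE : ∀ y, ((⟪gradient (fin h) xbar, xplus⟫ - fin g xplus - fin h xplus : ℝ) : EReal)
      ≤ econj g y + econj h (gradient (fin h) xbar - y) := by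
    intro y
    have e1 : (((⟪y, xplus⟫ : ℝ) : EReal) - g xplus) ≤ econj g y := by simp only [econj]; exact le_iSup (fun θ => (((⟪y, θ⟫ : ℝ) : EReal) - g θ)) xplus
    have e2 : (((⟪gradient (fin h) xbar - y, xplus⟫ : ℝ) : EReal) - h xplus)
        ≤ econj h (gradient (fin h) xbar - y) := by
      simp only [econj]
      exact le_iSup (fun θ => (((⟪gradient (fin h) xbar - y, θ⟫ : ℝ) : EReal) - h θ)) xplus
    have hE : ((⟪gradient (fin h) xbar, xplus⟫ - fin g xplus - fin h xplus : ℝ) : EReal)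
        = ((((⟪y, xplus⟫ : ℝ)) : EReal) - g xplus)
          + ((((⟪gradient (fin h) xbar - y, xplus⟫ : ℝ)) : EReal) - h xplus) := by
      rw [hgp, hhp, ← EReal.coe_sub, ← EReal.coe_sub, ← EReal.coe_add]
      norm_cast
      rw [inner_sub_left]
      ring
    rw [hE]
    exact add_le_add e1 e2
  -- conclusion
  refine ⟨gradient (fin h) xbar - gradient (fin h) xplus, fun y => ?_, by abel⟩
  have hsub : gradient (fin h) xbar - (gradient (fin h) xbar - gradient (fin h) xplus)
      = gradient (fin h) xplus := sub_sub_cancel _ _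
  rw [hsub, claimD1, claimD2, ← EReal.coe_add]
  have hval : (⟪gradient (fin h) xbar - gradient (fin h) xplus, xplus⟫ - fin g xplus)
      + (⟪gradient (fin h) xplus, xplus⟫ - fin h xplus)
      = ⟪gradient (fin h) xbar, xplus⟫ - fin g xplus - fin h xplus := by
    rw [inner_sub_left]; ring
  rw [hval]
  exact claimE y
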